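/- Let λ₁ = λ₂ = λ > 0 and consider the matrix A = [[λ, 1],[0, λ]] arising from the substitution u = x' − λx in the equation x'' − 2λx' + λ²x = 0. Then the system x' = Ax is Hyers-Ulam stable on ℝ with best (minimal) constant K = (1+λ)/λ² = ‖A⁻¹‖_∞. -/

import Mathlib

open Matrix

/-- Induced matrix max-norm (maximum row sum of absolute values). -/
noncomputable def matNormInf (M : Matrix (Fin 2) (Fin 2) ℝ) : ℝ :=
  max (|M 0 0| + |M 0 1|) (|M 1 0| + |M 1 1|)

/-- Hyers-Ulam stability of `x' = Ax` on `ℝ` with constant `K` (max norm on `ℝ²`). -/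
def IsHUSWith (A : Matrix (Fin 2) (Fin 2) ℝ) (K : ℝ) : Prop :=
  ∀ ε > (0:ℝ), ∀ φ : ℝ → (Fin 2 → ℝ), Differentiable ℝ φ →
    (∀ t : ℝ, ‖deriv φ t - A.mulVec (φ t)‖ ≤ ε) →
    ∃ x₀ : Fin 2 → ℝ, ∀ t : ℝ,
      ‖φ t - (NormedSpace.exp (t • A)).mulVec x₀‖ ≤ K * ε


/-- exp of a square-zero element. -/
theorem exp_sq_zero {𝔸 : Type*} [Ring 𝔸] [Algebra ℝ 𝔸] [TopologicalSpace 𝔸]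
    [IsTopologicalRing 𝔸] [T2Space 𝔸] (a : 𝔸) (h : a ^ 2 = 0) :
    NormedSpace.exp a = 1 + a := by
  have hE : NormedSpace.exp a = ∑' n : ℕ, (((n.factorial : ℕ)) : ℝ)⁻¹ • a ^ n := by
    rw [NormedSpace.exp_eq_tsum ℝ]
  rw [hE]
  have hz : ∀ n ∉ ({0, 1} : Finset ℕ), (((n.factorial : ℕ) : ℝ)⁻¹ • a ^ n) = 0 := by
    intro n hn
    simp only [Finset.mem_insert, Finset.mem_singleton] at hn
    have h2 : 2 ≤ n := by omega
    have : a ^ n = 0 := by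
      calc a ^ n = a ^ 2 * a ^ (n - 2) := by rw [← pow_add]; congr 1; omega
        _ = 0 := by rw [h, zero_mul]
    simp [this]
  rw [tsum_eq_sum hz]
  norm_num [Finset.sum_pair]

theorem exp_formula (lam t : ℝ) :
    NormedSpace.exp (t • (!![lam, 1; 0, lam] : Matrix (Fin 2) (Fin 2) ℝ)) =
      Real.exp (lam * t) • !![1, t; 0, 1] := by
  have hsplit : t • (!![lam, 1; 0, lam] : Matrix (Fin 2) (Fin 2) ℝ) =
      Matrix.diagonal (fun _ => lam * t) + t • !![0, 1; 0, 0] := by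
    ext i j; fin_cases i <;> fin_cases j <;> simp [Matrix.diagonal, mul_comm]
  have hcomm : Commute (Matrix.diagonal (fun _ => lam * t) : Matrix (Fin 2) (Fin 2) ℝ)
      (t • !![0, 1; 0, 0]) := by
    have : (Matrix.diagonal (fun _ => lam * t) : Matrix (Fin 2) (Fin 2) ℝ) = (lam * t) • 1 := by
      ext i j; fin_cases i <;> fin_cases j <;> simp [Matrix.diagonal]
    rw [this]
    exact (Commute.one_left _).smul_left _
  have hsq : ((t • !![0, 1; 0, 0] : Matrix (Fin 2) (Fin 2) ℝ)) ^ 2 = 0 := by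
    rw [smul_pow]
    have : (!![0, 1; 0, 0] : Matrix (Fin 2) (Fin 2) ℝ) ^ 2 = 0 := by
      rw [pow_two]; ext i j; fin_cases i <;> fin_cases j <;> simp [Matrix.mul_apply, Fin.sum_univ_two]
    rw [this, smul_zero]
  rw [hsplit, Matrix.exp_add_of_commute _ _ hcomm, Matrix.exp_diagonal,
    exp_sq_zero _ hsq]
  rw [Pi.exp_def]
  have hde : (fun i : Fin 2 => NormedSpace.exp ((fun _ : Fin 2 => lam * t) i)) =
      fun _ => Real.exp (lam * t) := by
    funext _; rw [← Real.exp_eq_exp_ℝ]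
  rw [hde]
  ext i j; fin_cases i <;> fin_cases j <;>
    simp [Matrix.mul_apply, Matrix.diagonal, Fin.sum_univ_two]


theorem scalar_hus (lam M : ℝ) (hlam : 0 < lam) (ψ h : ℝ → ℝ)
    (hd : ∀ t, HasDerivAt ψ (lam * ψ t + h t) t)
    (hb : ∀ t, |h t| ≤ M) :
    ∃ c : ℝ, ∀ t, |ψ t - c * Real.exp (lam * t)| ≤ M / lam := by
  have hM : 0 ≤ M := le_trans (abs_nonneg _) (hb 0)
  set k := M / lam with hk
  have hk0 : 0 ≤ k := div_nonneg hM hlam.le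
  -- the auxiliary functions
  set u : ℝ → ℝ := fun t => Real.exp (-(lam * t)) * ψ t with hu
  set v : ℝ → ℝ := fun t => u t + k * Real.exp (-(lam * t)) with hv
  set w : ℝ → ℝ := fun t => u t - k * Real.exp (-(lam * t)) with hw
  have hexp : ∀ t : ℝ, HasDerivAt (fun s => Real.exp (-(lam * s)))
      (-lam * Real.exp (-(lam * t))) t := by
    intro t
    have h1 : HasDerivAt (fun s : ℝ => -(lam * s)) (-lam) t := by
      simpa [Pi.neg_def] using ((hasDerivAt_id t).const_mul lam).neg
    simpa [mul_comm] using h1.exp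
  have hu' : ∀ t, HasDerivAt u (Real.exp (-(lam * t)) * h t) t := by
    intro t
    have := (hexp t).mul (hd t)
    refine this.congr_deriv (Eq.symm ?_)
    ring
  have hv' : ∀ t, HasDerivAt v (Real.exp (-(lam * t)) * (h t - M)) t := by
    intro t
    have := (hu' t).add (((hexp t)).const_mul k)
    refine this.congr_deriv (Eq.symm ?_)
    have hll : lam * lam⁻¹ = (1:ℝ) := mul_inv_cancel₀ hlam.ne'
    simp only [hk, div_eq_mul_inv]
    linear_combination (Real.exp (-(lam * t)) * M) * hll
  have hw' : ∀ t, HasDerivAt w (Real.exp (-(lam * t)) * (h t + M)) t := by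
    intro t
    have := (hu' t).sub (((hexp t)).const_mul k)
    refine this.congr_deriv (Eq.symm ?_)
    have hll : lam * lam⁻¹ = (1:ℝ) := mul_inv_cancel₀ hlam.ne'
    simp only [hk, div_eq_mul_inv]
    linear_combination (-(Real.exp (-(lam * t)) * M)) * hll
  have hva : Antitone v := by
    apply antitone_of_deriv_nonpos (fun t => (hv' t).differentiableAt)
    intro t
    rw [(hv' t).deriv]
    exact mul_nonpos_of_nonneg_of_nonpos (Real.exp_pos _).le
      (sub_nonpos.2 (abs_le.1 (hb t)).2)
  have hwm : Monotone w := by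
    apply monotone_of_deriv_nonneg (fun t => (hw' t).differentiableAt)
    intro t
    rw [(hw' t).deriv]
    exact mul_nonneg (Real.exp_pos _).le
      (by linarith [(abs_le.1 (hb t)).1])
  have hwv : ∀ s t : ℝ, w s ≤ v t := by
    intro s t
    rcases le_total s t with hst | hst
    · exact (hwm hst).trans (by
        simp only [hw, hv]
        nlinarith [Real.exp_pos (-(lam * t))])
    · calc w s ≤ v s := by
            simp only [hw, hv]
            nlinarith [Real.exp_pos (-(lam * s))]
        _ ≤ v t := hva hst
  have hbdd : BddAbove (Set.range w) := ⟨v 0, by rintro _ ⟨t, rfl⟩; exact hwv t 0⟩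
  set c := ⨆ t, w t with hc
  have hc1 : ∀ t, w t ≤ c := fun t => le_ciSup hbdd t
  have hc2 : ∀ t, c ≤ v t := fun t => ciSup_le fun s => hwv s t
  refine ⟨c, fun t => ?_⟩
  have h1 : |u t - c| ≤ k * Real.exp (-(lam * t)) := by
    rw [abs_sub_le_iff]
    constructor
    · have := hc1 t; simp only [hw] at this; linarith
    · have := hc2 t; simp only [hv] at this; linarith
  have h2 : ψ t - c * Real.exp (lam * t) = Real.exp (lam * t) * (u t - c) := by
    simp only [hu]
    rw [mul_sub, ← mul_assoc, ← Real.exp_add]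
    ring_nf
    simp [Real.exp_zero]
  rw [h2, abs_mul, abs_of_pos (Real.exp_pos _)]
  calc Real.exp (lam * t) * |u t - c| ≤ Real.exp (lam * t) * (k * Real.exp (-(lam * t))) := by
        exact mul_le_mul_of_nonneg_left h1 (Real.exp_pos _).le
    _ = k := by rw [← mul_assoc, mul_comm (Real.exp (lam*t)), mul_assoc, ← Real.exp_add]; simp

theorem comp_le {v : Fin 2 → ℝ} {r : ℝ} (h : ‖v‖ ≤ r) (i : Fin 2) : |v i| ≤ r :=
  le_trans (by simpa using norm_le_pi_norm v i) h

theorem stmt19_part1 (lam : ℝ) (hlam : 0 < lam)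
    (A : Matrix (Fin 2) (Fin 2) ℝ) (hA : A = !![lam, 1; 0, lam]) :
    (1 + lam) / lam ^ 2 = matNormInf A⁻¹ := by
    have hInv : A⁻¹ = !![1/lam, -(1/lam^2); 0, 1/lam] := by
      apply Matrix.inv_eq_right_inv
      rw [hA]
      ext i j
      fin_cases i <;> fin_cases j <;>
        simp [Matrix.mul_apply, Fin.sum_univ_two] <;> field_simp <;> try ring
    have h1 : |1/lam| = 1/lam := abs_of_pos (by positivity)
    have h2 : |(-(1/lam^2))| = 1/lam^2 := by rw [abs_neg]; exact abs_of_pos (by positivity)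
    rw [hInv]
    simp only [matNormInf]
    norm_num [h1, h2]
    rw [abs_of_pos hlam, max_eq_left (le_add_of_nonneg_right (by positivity))]
    field_simp
    ring

theorem stmt19_part2 (lam : ℝ) (hlam : 0 < lam)
    (A : Matrix (Fin 2) (Fin 2) ℝ) (hA : A = !![lam, 1; 0, lam]) :
    IsHUSWith A ((1 + lam) / lam ^ 2) := by
    intro ε hε φ hφ hb
    have hAv : ∀ v : Fin 2 → ℝ, A.mulVec v = ![lam * v 0 + v 1, lam * v 1] := by
      intro v
      rw [hA]
      ext i
      fin_cases i <;> simp [Matrix.mulVec, dotProduct, Fin.sum_univ_two]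
    have hder : ∀ t : ℝ, ∀ i : Fin 2, HasDerivAt (fun s => φ s i) (deriv φ t i) t :=
      fun t => hasDerivAt_pi.1 (hφ t).hasDerivAt
    -- componentwise bounds on the defect
    have hg : ∀ t : ℝ, ∀ i : Fin 2, |deriv φ t i - (A.mulVec (φ t)) i| ≤ ε := by
      intro t i
      have := comp_le (hb t) i
      simpa using this
    -- second component
    have hd1 : ∀ t : ℝ, HasDerivAt (fun s => φ s 1)
        (lam * φ t 1 + (deriv φ t 1 - lam * φ t 1)) t := by
      intro t
      have := hder t 1
      convert this using 1
      ring
    have hb1 : ∀ t : ℝ, |deriv φ t 1 - lam * φ t 1| ≤ ε := by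
      intro t
      have := hg t 1
      rwa [hAv (φ t)] at this
    obtain ⟨c₁, hc₁⟩ := scalar_hus lam ε hlam _ _ hd1 hb1
    -- first component, shifted
    set ρ : ℝ → ℝ := fun t => φ t 0 - c₁ * t * Real.exp (lam * t) with hρ
    set h0 : ℝ → ℝ := fun t =>
      (deriv φ t 0 - (lam * φ t 0 + φ t 1)) + (φ t 1 - c₁ * Real.exp (lam * t)) with hh0
    have hd0 : ∀ t : ℝ, HasDerivAt ρ (lam * ρ t + h0 t) t := by
      intro t
      have hexp : HasDerivAt (fun s : ℝ => Real.exp (lam * s)) (lam * Real.exp (lam * t)) t := by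
        have h1 : HasDerivAt (fun s : ℝ => lam * s) lam t := by
          simpa using (hasDerivAt_id t).const_mul lam
        simpa [mul_comm] using h1.exp
      have hmul : HasDerivAt (fun s : ℝ => c₁ * s * Real.exp (lam * s))
          (c₁ * Real.exp (lam * t) + (c₁ * t) * (lam * Real.exp (lam * t))) t := by
        have := (((hasDerivAt_id t).const_mul c₁).mul hexp)
        refine this.congr_deriv (Eq.symm ?_)
        simp only [id_eq]
        ring
      have := (hder t 0).sub hmul
      refine this.congr_deriv (Eq.symm ?_)
      simp only [hρ, hh0]
      ring
    have hb0 : ∀ t : ℝ, |h0 t| ≤ ε + ε / lam := by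
      intro t
      have h1 : |deriv φ t 0 - (lam * φ t 0 + φ t 1)| ≤ ε := by
        have := hg t 0
        rwa [hAv (φ t)] at this
      have h2 := hc₁ t
      calc |h0 t| ≤ |deriv φ t 0 - (lam * φ t 0 + φ t 1)| + |φ t 1 - c₁ * Real.exp (lam * t)| :=
            abs_add_le _ _
        _ ≤ ε + ε / lam := add_le_add h1 h2
    obtain ⟨c₀, hc₀⟩ := scalar_hus lam (ε + ε / lam) hlam _ _ hd0 hb0
    refine ⟨![c₀, c₁], fun t => ?_⟩
    rw [hA, exp_formula]
    have hKε : (0:ℝ) ≤ (1 + lam) / lam ^ 2 * ε := by positivity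
    rw [pi_norm_le_iff_of_nonneg hKε]
    intro i
    have hKeq : (ε + ε / lam) / lam = (1 + lam) / lam ^ 2 * ε := by
      field_simp
      ring
    fin_cases i
    · have h2 : (φ t - (Real.exp (lam*t) • !![1, t; 0, 1]).mulVec ![c₀, c₁]) 0 =
          ρ t - c₀ * Real.exp (lam * t) := by
        simp [Matrix.mulVec, dotProduct, Fin.sum_univ_two, hρ]
        try ring
      rw [Real.norm_eq_abs]
      show |(φ t - (Real.exp (lam*t) • !![1, t; 0, 1]).mulVec ![c₀, c₁]) 0| ≤ _
      rw [h2, ← hKeq]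
      exact hc₀ t
    · have h2 : (φ t - (Real.exp (lam*t) • !![1, t; 0, 1]).mulVec ![c₀, c₁]) 1 =
          φ t 1 - c₁ * Real.exp (lam * t) := by
        simp [Matrix.mulVec, dotProduct, Fin.sum_univ_two]
        try ring
      rw [Real.norm_eq_abs]
      show |(φ t - (Real.exp (lam*t) • !![1, t; 0, 1]).mulVec ![c₀, c₁]) 1| ≤ _
      rw [h2]
      refine le_trans (hc₁ t) ?_
      rw [div_le_iff₀ hlam] at *
      have : (1 + lam) / lam ^ 2 * ε * lam = (1 + lam) / lam * ε := by
        field_simp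
      rw [this]
      have h3 : (1:ℝ) ≤ (1 + lam) / lam := by
        rw [le_div_iff₀ hlam]
        linarith
      nlinarith

theorem stmt19_part3 (lam : ℝ) (hlam : 0 < lam)
    (A : Matrix (Fin 2) (Fin 2) ℝ) (hA : A = !![lam, 1; 0, lam]) :
    ∀ K : ℝ, IsHUSWith A K → K ≥ (1 + lam) / lam ^ 2 := by
    intro K hK
    set p : Fin 2 → ℝ := ![-((1+lam)/lam^2), 1/lam] with hp
    have hAp : A.mulVec p = ![-1, 1] := by
      rw [hA]
      ext i
      fin_cases i <;>
        · simp [Matrix.mulVec, dotProduct, Fin.sum_univ_two, hp]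
          field_simp
          try ring
    have hφd : Differentiable ℝ (fun _ : ℝ => p) := differentiable_const _
    have hbound : ∀ t : ℝ, ‖deriv (fun _ : ℝ => p) t - A.mulVec p‖ ≤ 1 := by
      intro t
      rw [deriv_const]
      rw [hAp]
      rw [show (0 : Fin 2 → ℝ) - ![-1,1] = ![1,-1] by ext i; fin_cases i <;> simp]
      rw [pi_norm_le_iff_of_nonneg (by norm_num)]
      intro i
      fin_cases i <;> simp
    obtain ⟨x₀, hx⟩ := hK 1 one_pos (fun _ => p) hφd (by simpa using hbound)
    rw [hA] at hx
    -- rewrite exp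
    have hx' : ∀ t : ℝ, ∀ i : Fin 2,
        |(p - (Real.exp (lam*t) • !![1, t; 0, 1]).mulVec x₀) i| ≤ K := by
      intro t i
      have := hx t
      rw [exp_formula] at this
      simpa using comp_le this i
    have hx0 : ∀ t : ℝ, |p 0 - Real.exp (lam*t) * (x₀ 0 + t * x₀ 1)| ≤ K := by
      intro t
      have := hx' t 0
      have h2 : (p - (Real.exp (lam*t) • !![1, t; 0, 1]).mulVec x₀) 0 =
          p 0 - Real.exp (lam*t) * (x₀ 0 + t * x₀ 1) := by
        simp [Matrix.mulVec, dotProduct, Fin.sum_univ_two]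
        ring
      rwa [h2] at this
    have hx1 : ∀ t : ℝ, |p 1 - Real.exp (lam*t) * x₀ 1| ≤ K := by
      intro t
      have := hx' t 1
      have h2 : (p - (Real.exp (lam*t) • !![1, t; 0, 1]).mulVec x₀) 1 =
          p 1 - Real.exp (lam*t) * x₀ 1 := by
        simp [Matrix.mulVec, dotProduct, Fin.sum_univ_two]
      rwa [h2] at this
    -- growth argument
    have hgrow : ∀ b : ℝ, ∀ q : ℝ, (∀ t : ℝ, Real.exp (lam * t) * b ≤ q) → b ≤ 0 := by
      intro b q hq
      by_contra hb
      push_neg at hb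
      have hq0 : 0 < q := lt_of_lt_of_le (by positivity : 0 < Real.exp (lam * 0) * b) (hq 0)
      set t := q / (lam * b) with htdef
      have h1 : lam * t + 1 ≤ Real.exp (lam * t) := Real.add_one_le_exp _
      have h2 : Real.exp (lam * t) * b ≤ q := hq t
      have h3 : (lam * t + 1) * b ≤ Real.exp (lam * t) * b :=
        mul_le_mul_of_nonneg_right h1 hb.le
      have ht : lam * t * b = q := by
        rw [htdef]
        have hlb : lam * b ≠ 0 := by positivity
        field_simp
      nlinarith
    have hxx1 : x₀ 1 = 0 := by
      have h1 : ∀ t, Real.exp (lam * t) * |x₀ 1| ≤ K + |p 1| := by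
        intro t
        have := hx1 t
        have h2 : |Real.exp (lam*t) * x₀ 1| - |p 1| ≤ K := by
          have := abs_sub_abs_le_abs_sub (Real.exp (lam*t) * x₀ 1) (p 1)
          rw [abs_sub_comm] at this
          linarith
        rw [abs_mul, abs_of_pos (Real.exp_pos _)] at h2
        linarith
      have := hgrow |x₀ 1| (K + |p 1|) h1
      exact abs_eq_zero.mp (le_antisymm this (abs_nonneg _))
    have hxx0 : x₀ 0 = 0 := by
      have h1 : ∀ t, Real.exp (lam * t) * |x₀ 0| ≤ K + |p 0| := by
        intro t
        have h0 := hx0 t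
        rw [hxx1, mul_zero, add_zero] at h0
        have h2 : |Real.exp (lam*t) * x₀ 0| - |p 0| ≤ K := by
          have := abs_sub_abs_le_abs_sub (Real.exp (lam*t) * x₀ 0) (p 0)
          rw [abs_sub_comm] at this
          linarith
        rw [abs_mul, abs_of_pos (Real.exp_pos _)] at h2
        linarith
      have := hgrow |x₀ 0| (K + |p 0|) h1
      exact abs_eq_zero.mp (le_antisymm this (abs_nonneg _))
    have := hx0 0
    have hp0 : p 0 = -((1+lam)/lam^2) := by simp [hp]
    rw [hxx0, hxx1, hp0] at this
    rw [show -((1+lam)/lam^2) - Real.exp (lam * 0) * (0 + 0 * 0) = -((1+lam)/lam^2) by ring] at this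
    rw [abs_neg, abs_of_pos (by positivity)] at this
    linarith

theorem stmt_19 (lam : ℝ) (hlam : 0 < lam)
    (A : Matrix (Fin 2) (Fin 2) ℝ) (hA : A = !![lam, 1; 0, lam]) :
    (1 + lam) / lam ^ 2 = matNormInf A⁻¹ ∧
    IsHUSWith A ((1 + lam) / lam ^ 2) ∧
    ∀ K : ℝ, IsHUSWith A K → K ≥ (1 + lam) / lam ^ 2 := by
  exact ⟨stmt19_part1 lam hlam A hA, stmt19_part2 lam hlam A hA, stmt19_part3 lam hlam A hA⟩
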